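/- The image of the embedding I_S : Pert_{n,k} → Def_{n,k} is exactly the subring of S_k-invariant elements of Def_{n,k}; that is, every element p of Def_{n,k} with σ(p)=p for all σ in S_k lies in the image of I_S. -/
import Mathlib


open MvPolynomial

noncomputable section

variable (K : Type*) [Field K]

/-- The ideal of `K[λ^1,…,λ^n]` generated by all products of `k+1` generators. -/
def pertIdeal (n k : ℕ) : Ideal (MvPolynomial (Fin n) K) :=
  Ideal.span {p | ∃ f : Fin (k + 1) → Fin n, p = ∏ j, X (f j)}

/-- `Pert_{n,k} = K[λ^1,…,λ^n]/(monomials of degree k+1)`. -/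
abbrev Pert (n k : ℕ) := MvPolynomial (Fin n) K ⧸ pertIdeal K n k

/-- The ideal of `K[ε_i^α]` generated by `ε_i^α ε_i^β` for each fixed `i`. -/
def defIdeal (n k : ℕ) : Ideal (MvPolynomial (Fin k × Fin n) K) :=
  Ideal.span {p | ∃ (i : Fin k) (a b : Fin n), p = X (i, a) * X (i, b)}

/-- `Def_{n,k} = K[ε_i^α : 1≤i≤k, 1≤α≤n]/(ε_i^α ε_i^β)`. -/
abbrev DefR (n k : ℕ) := MvPolynomial (Fin k × Fin n) K ⧸ defIdeal K n k

/-- The generator `λ^a` of `Pert_{n,k}`. -/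
def lam {n k : ℕ} (a : Fin n) : Pert K n k := Ideal.Quotient.mk _ (X a)

/-- The generator `ε_i^a` of `Def_{n,k}`. -/
def eps {n k : ℕ} (i : Fin k) (a : Fin n) : DefR K n k := Ideal.Quotient.mk _ (X (i, a))

variable {K}
variable {n k : ℕ}

lemma eps_mul_same (i : Fin k) (a b : Fin n) : eps K i a * eps K i b = 0 := by
  rw [eps, eps, ← map_mul, Ideal.Quotient.eq_zero_iff_mem]
  exact Ideal.subset_span ⟨i, a, b, rfl⟩

lemma prod_eps_collision (σ : Equiv.Perm (Fin k)) {A : Finset (Fin k × Fin n)}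
    {p q : Fin k × Fin n} (hp : p ∈ A) (hq : q ∈ A)
    (hfst : p.1 = q.1) (hne : p ≠ q) :
    ∏ r ∈ A, eps K (σ r.1) r.2 = 0 := by
  rw [← Finset.mul_prod_erase _ _ hp,
    ← Finset.mul_prod_erase _ _ (Finset.mem_erase.2 ⟨hne.symm, hq⟩), ← mul_assoc, hfst,
    eps_mul_same, zero_mul]


lemma sum_perm_prod_mem [CharZero K] (S : Subalgebra K (DefR K n k))
    (hE : ∀ a : Fin n, (∑ i : Fin k, eps K i a) ∈ S)
    (A : Finset (Fin k × Fin n)) (hA : Set.InjOn Prod.fst (A : Set (Fin k × Fin n))) :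
    (∑ σ : Equiv.Perm (Fin k), ∏ p ∈ A, eps K (σ p.1) p.2) ∈ S := by
  classical
  revert hA
  induction A using Finset.induction_on with
  | empty =>
      intro _
      simp only [Finset.prod_empty, Finset.sum_const, Finset.card_univ]
      exact nsmul_mem (one_mem _) _
  | @insert p₀ A hp₀ ih =>
      intro hA
      have hAinj : Set.InjOn Prod.fst (A : Set (Fin k × Fin n)) :=
        hA.mono (by exact_mod_cast Finset.coe_subset.2 (Finset.subset_insert p₀ A))
      have hp₀A : ∀ p ∈ A, p.1 ≠ p₀.1 := by
        intro p hp h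
        have : p = p₀ :=
          hA (Finset.mem_coe.2 (Finset.mem_insert_of_mem hp))
            (Finset.mem_coe.2 (Finset.mem_insert_self p₀ A)) h
        exact hp₀ (this ▸ hp)
      have hcard : A.card < k := by
        have h1 : (insert p₀ A).card ≤ (Finset.univ : Finset (Fin k)).card :=
          Finset.card_le_card_of_injOn Prod.fst (fun p _ => Finset.mem_univ p.1) hA
        rw [Finset.card_insert_of_notMem hp₀, Finset.card_univ, Fintype.card_fin] at h1
        omega
      have hFG : ∀ (σ : Equiv.Perm (Fin k)) (i : Fin k), (∀ p ∈ A, σ p.1 ≠ i) →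
          eps K i p₀.2 * ∏ p ∈ A, eps K (σ p.1) p.2
            = ∏ p ∈ insert p₀ A, eps K ((Equiv.swap i (σ p₀.1) * σ) p.1) p.2 := by
        intro σ i hi
        rw [Finset.prod_insert hp₀]
        have h1 : (Equiv.swap i (σ p₀.1) * σ) p₀.1 = i := by
          rw [Equiv.Perm.mul_apply, Equiv.swap_apply_right]
        rw [h1]
        congr 1
        exact (Finset.prod_congr rfl fun p hp => by
          rw [Equiv.Perm.mul_apply,
            Equiv.swap_apply_of_ne_of_ne (hi p hp) (σ.injective.ne (hp₀A p hp))]).symm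
      have key : (∑ i : Fin k, eps K i p₀.2)
            * (∑ σ : Equiv.Perm (Fin k), ∏ p ∈ A, eps K (σ p.1) p.2)
          = (k - A.card) •
            ∑ τ : Equiv.Perm (Fin k), ∏ p ∈ insert p₀ A, eps K (τ p.1) p.2 := by
        calc (∑ i : Fin k, eps K i p₀.2)
              * (∑ σ : Equiv.Perm (Fin k), ∏ p ∈ A, eps K (σ p.1) p.2)
            = ∑ q ∈ (Finset.univ ×ˢ Finset.univ : Finset (Equiv.Perm (Fin k) × Fin k)),
                eps K q.2 p₀.2 * ∏ p ∈ A, eps K (q.1 p.1) p.2 := by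
              rw [Finset.sum_product, Finset.mul_sum]
              refine Finset.sum_congr rfl fun σ _ => ?_
              rw [Finset.sum_mul]
          _ = ∑ q ∈ (Finset.univ ×ˢ Finset.univ : Finset (Equiv.Perm (Fin k) × Fin k)).filter
                  (fun q => ∀ p ∈ A, q.1 p.1 ≠ q.2),
                eps K q.2 p₀.2 * ∏ p ∈ A, eps K (q.1 p.1) p.2 := by
              refine (Finset.sum_filter_of_ne ?_).symm
              intro q _ hne p hp hcol
              apply hne
              rw [← Finset.mul_prod_erase _ (fun p => eps K (q.1 p.1) p.2) hp, hcol,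
                ← mul_assoc, eps_mul_same, zero_mul]
          _ = ∑ q ∈ (Finset.univ ×ˢ Finset.univ : Finset (Equiv.Perm (Fin k) × Fin k)).filter
                  (fun q => ∀ p ∈ A, q.1 p.1 ≠ q.2),
                ∏ p ∈ insert p₀ A, eps K (q.1 p.1) p.2 := by
              refine Finset.sum_nbij'
                (fun q => (Equiv.swap q.2 (q.1 p₀.1) * q.1, q.1 p₀.1))
                (fun q => (Equiv.swap q.2 (q.1 p₀.1) * q.1, q.1 p₀.1)) ?_ ?_ ?_ ?_ ?_
              · rintro ⟨σ, i⟩ hq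
                rw [Finset.mem_filter] at hq ⊢
                refine ⟨Finset.mem_product.2 ⟨Finset.mem_univ _, Finset.mem_univ _⟩,
                  fun p hp => ?_⟩
                show (Equiv.swap i (σ p₀.1) * σ) p.1 ≠ σ p₀.1
                rw [Equiv.Perm.mul_apply,
                  Equiv.swap_apply_of_ne_of_ne (hq.2 p hp) (σ.injective.ne (hp₀A p hp))]
                exact σ.injective.ne (hp₀A p hp)
              · rintro ⟨σ, i⟩ hq
                rw [Finset.mem_filter] at hq ⊢
                refine ⟨Finset.mem_product.2 ⟨Finset.mem_univ _, Finset.mem_univ _⟩,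
                  fun p hp => ?_⟩
                show (Equiv.swap i (σ p₀.1) * σ) p.1 ≠ σ p₀.1
                rw [Equiv.Perm.mul_apply,
                  Equiv.swap_apply_of_ne_of_ne (hq.2 p hp) (σ.injective.ne (hp₀A p hp))]
                exact σ.injective.ne (hp₀A p hp)
              · rintro ⟨σ, i⟩ _
                have h1 : (Equiv.swap i (σ p₀.1) * σ) p₀.1 = i := by
                  rw [Equiv.Perm.mul_apply, Equiv.swap_apply_right]
                dsimp only
                rw [h1, Equiv.swap_comm, ← mul_assoc, Equiv.swap_mul_self, one_mul]
              · rintro ⟨σ, i⟩ _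
                have h1 : (Equiv.swap i (σ p₀.1) * σ) p₀.1 = i := by
                  rw [Equiv.Perm.mul_apply, Equiv.swap_apply_right]
                dsimp only
                rw [h1, Equiv.swap_comm, ← mul_assoc, Equiv.swap_mul_self, one_mul]
              · rintro ⟨σ, i⟩ hq
                rw [Finset.mem_filter] at hq
                exact hFG σ i hq.2
          _ = (k - A.card) •
                ∑ τ : Equiv.Perm (Fin k), ∏ p ∈ insert p₀ A, eps K (τ p.1) p.2 := by
              rw [Finset.sum_filter, Finset.sum_product]
              have hinner : ∀ σ : Equiv.Perm (Fin k),
                  (∑ i : Fin k, if (∀ p ∈ A, σ p.1 ≠ i) then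
                    ∏ p ∈ insert p₀ A, eps K (σ p.1) p.2 else 0)
                  = (k - A.card) • ∏ p ∈ insert p₀ A, eps K (σ p.1) p.2 := by
                intro σ
                rw [← Finset.sum_filter, Finset.sum_const]
                congr 1
                have himg : Finset.filter (fun i => ∀ p ∈ A, σ p.1 ≠ i) Finset.univ
                    = (A.image fun p => σ p.1)ᶜ := by
                  ext i
                  simp [eq_comm]
                rw [himg, Finset.card_compl, Fintype.card_fin,
                  Finset.card_image_of_injOn (fun p hp q hq h => hAinj hp hq (σ.injective h))]
              simp_rw [hinner]
              rw [← Finset.smul_sum]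
      have hmem : (∑ i : Fin k, eps K i p₀.2)
          * (∑ σ : Equiv.Perm (Fin k), ∏ p ∈ A, eps K (σ p.1) p.2) ∈ S :=
        mul_mem (hE p₀.2) (ih hAinj)
      rw [key] at hmem
      have hc : ((k - A.card : ℕ) : K) ≠ 0 :=
        Nat.cast_ne_zero.2 (Nat.sub_ne_zero_of_lt hcard)
      have hS : (∑ τ : Equiv.Perm (Fin k), ∏ p ∈ insert p₀ A, eps K (τ p.1) p.2)
          = ((k - A.card : ℕ) : K)⁻¹ • ((k - A.card) •
            ∑ τ : Equiv.Perm (Fin k), ∏ p ∈ insert p₀ A, eps K (τ p.1) p.2) := by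
        rw [← Nat.cast_smul_eq_nsmul K, smul_smul, inv_mul_cancel₀ hc, one_smul]
      rw [hS]
      exact Subalgebra.smul_mem _ hmem _


lemma eps_pow_eq_zero (i : Fin k) (a : Fin n) {m : ℕ} (hm : 2 ≤ m) :
    eps K i a ^ m = 0 := by
  obtain ⟨t, rfl⟩ := Nat.exists_eq_add_of_le hm
  rw [pow_add, pow_two, eps_mul_same, zero_mul]

lemma sum_perm_prod_pow_mem [CharZero K] (S : Subalgebra K (DefR K n k))
    (hE : ∀ a : Fin n, (∑ i : Fin k, eps K i a) ∈ S) (u : (Fin k × Fin n) →₀ ℕ) :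
    (∑ σ : Equiv.Perm (Fin k), ∏ p ∈ u.support, eps K (σ p.1) p.2 ^ u p) ∈ S := by
  classical
  by_cases hexp : ∀ p ∈ u.support, u p = 1
  · have hprod : ∀ σ : Equiv.Perm (Fin k),
        ∏ p ∈ u.support, eps K (σ p.1) p.2 ^ u p = ∏ p ∈ u.support, eps K (σ p.1) p.2 :=
      fun σ => Finset.prod_congr rfl fun p hp => by rw [hexp p hp, pow_one]
    simp_rw [hprod]
    by_cases hinj : Set.InjOn Prod.fst (u.support : Set (Fin k × Fin n))
    · exact sum_perm_prod_mem S hE u.support hinj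
    · rw [Set.InjOn] at hinj
      push_neg at hinj
      obtain ⟨p, hp, q, hq, hfst, hne⟩ := hinj
      have hz : ∀ σ : Equiv.Perm (Fin k), ∏ r ∈ u.support, eps K (σ r.1) r.2 = 0 :=
        fun σ => prod_eps_collision σ (Finset.mem_coe.1 hp) (Finset.mem_coe.1 hq) hfst hne
      simp_rw [hz]
      rw [Finset.sum_const, smul_zero]
      exact zero_mem S
  · push_neg at hexp
    obtain ⟨p₀, hp₀, hne1⟩ := hexp
    have h2 : 2 ≤ u p₀ := by
      have := Finsupp.mem_support_iff.1 hp₀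
      omega
    have hz : ∀ σ : Equiv.Perm (Fin k),
        ∏ p ∈ u.support, eps K (σ p.1) p.2 ^ u p = 0 :=
      fun σ => Finset.prod_eq_zero hp₀ (eps_pow_eq_zero (σ p₀.1) p₀.2 h2)
    simp_rw [hz]
    rw [Finset.sum_const, smul_zero]
    exact zero_mem S

lemma mk_monomial (u : (Fin k × Fin n) →₀ ℕ) (c : K) :
    Ideal.Quotient.mk (defIdeal K n k) (monomial u c)
      = algebraMap K (DefR K n k) c * ∏ p ∈ u.support, eps K p.1 p.2 ^ u p := by
  rw [monomial_eq, Finsupp.prod, map_mul, map_prod]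
  simp only [map_pow]
  rfl


set_option synthInstance.maxHeartbeats 400000 in
set_option maxHeartbeats 1000000 in
/-- the image of `I_S : Pert_{n,k} → Def_{n,k}` is exactly the subring of
`S_k`-invariant elements: any `p` fixed by every `σ ∈ S_k` lies in the image of `I_S`. -/
theorem stmt3 (n k : ℕ) [CharZero K] (φ : Pert K n k →ₐ[K] DefR K n k)
    (hφ : ∀ a : Fin n, φ (lam K a) = ∑ i : Fin k, eps K i a)
    (action : Equiv.Perm (Fin k) → (DefR K n k →ₐ[K] DefR K n k))
    (haction : ∀ (σ : Equiv.Perm (Fin k)) (i : Fin k) (a : Fin n),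
      action σ (eps K i a) = eps K (σ i) a)
    (p : DefR K n k) (hp : ∀ σ : Equiv.Perm (Fin k), action σ p = p) :
    p ∈ Set.range φ := by

  classical
  have hE : ∀ a : Fin n, (∑ i : Fin k, eps K i a) ∈ φ.range := fun a => ⟨lam K a, hφ a⟩
  have hact : ∀ (σ : Equiv.Perm (Fin k)) (u : (Fin k × Fin n) →₀ ℕ) (c : K),
      action σ (Ideal.Quotient.mk (defIdeal K n k) (monomial u c))
        = algebraMap K (DefR K n k) c * ∏ p ∈ u.support, eps K (σ p.1) p.2 ^ u p := by
    intro σ u c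
    rw [mk_monomial, map_mul, AlgHom.commutes, map_prod]
    simp only [map_pow, haction]
  have hmono : ∀ (u : (Fin k × Fin n) →₀ ℕ) (c : K),
      (∑ σ : Equiv.Perm (Fin k), action σ (Ideal.Quotient.mk (defIdeal K n k) (monomial u c)))
        ∈ φ.range := by
    intro u c
    simp_rw [hact]
    rw [← Finset.mul_sum]
    exact mul_mem (φ.range.algebraMap_mem c) (sum_perm_prod_pow_mem φ.range hE u)
  obtain ⟨f, rfl⟩ := Ideal.Quotient.mk_surjective p
  have hdecomp : (Ideal.Quotient.mk (defIdeal K n k) f)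
      = ∑ u ∈ f.support, Ideal.Quotient.mk (defIdeal K n k) (monomial u (coeff u f)) := by
    conv_lhs => rw [← support_sum_monomial_coeff f]
    rw [map_sum]
  have hsum : (∑ σ : Equiv.Perm (Fin k), action σ (Ideal.Quotient.mk (defIdeal K n k) f))
      ∈ φ.range := by
    have h1 : ∀ σ : Equiv.Perm (Fin k), action σ (Ideal.Quotient.mk (defIdeal K n k) f)
        = ∑ u ∈ f.support, action σ (Ideal.Quotient.mk (defIdeal K n k)
            (monomial u (coeff u f))) := by
      intro σ
      rw [hdecomp, map_sum]
    simp_rw [h1]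
    rw [Finset.sum_comm]
    exact sum_mem fun u _ => hmono u (coeff u f)
  simp_rw [hp] at hsum
  rw [Finset.sum_const, Finset.card_univ] at hsum
  have hc : ((Fintype.card (Equiv.Perm (Fin k)) : ℕ) : K) ≠ 0 :=
    Nat.cast_ne_zero.2 Fintype.card_ne_zero
  have heq : Ideal.Quotient.mk (defIdeal K n k) f
      = ((Fintype.card (Equiv.Perm (Fin k)) : ℕ) : K)⁻¹ •
        (Fintype.card (Equiv.Perm (Fin k)) • Ideal.Quotient.mk (defIdeal K n k) f) := by
    rw [← Nat.cast_smul_eq_nsmul K, smul_smul, inv_mul_cancel₀ hc, one_smul]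
  have hfin : Ideal.Quotient.mk (defIdeal K n k) f ∈ φ.range := by
    rw [heq]
    exact Subalgebra.smul_mem _ hsum _
  obtain ⟨x, hx⟩ := hfin
  exact ⟨x, hx⟩
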